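/- (Lorentz invariance of the minimal connection coefficients, algebraic form.) Let Λ, t, s, ds, dΛ, ω ∈ ℂ⊗ℍ with Λ·Λ̄ = 1, and set ω' := Λ·ω·Λ̄ − dΛ·Λ̄. Then ⟨Λ·t·Λ̄*, dΛ·s·Λ̄* + Λ·ds·Λ̄* + Λ·s·(dΛ)‾* + ω'·(Λ·s·Λ̄*) + (Λ·s·Λ̄*)·(ω'‾*)⟩ = ⟨t, ds + ω·s + s·ω̄*⟩. (Here t plays the role of the dual basis element sᵘ, s of a basis element s_ν, and ds, dΛ of the derivatives ∂s_ν, ∂Λ, the transformed derivative being expanded by the Leibniz rule; the statement expresses Γ'^μ_{νρ} = Γ^μ_{νρ} under local Lorentz transformations.) -/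

import Mathlib

open scoped Quaternion

noncomputable section

/-- Componentwise complex conjugation `x ↦ x*` on the complexified quaternions `ℂ⊗ℍ`. -/
def cconj (x : ℍ[ℂ]) : ℍ[ℂ] :=
  ⟨(starRingEnd ℂ) x.re, (starRingEnd ℂ) x.imI, (starRingEnd ℂ) x.imJ, (starRingEnd ℂ) x.imK⟩

/-- `x̄*`: quaternionic conjugation (the star operation, negating the three imaginary
components) followed by componentwise complex conjugation. -/
def barStar (x : ℍ[ℂ]) : ℍ[ℂ] := cconj (star x)

/-- The bilinear inner product `⟨x,y⟩ = (x·ȳ).re`, so that `2⟨x,y⟩ = x·ȳ + y·x̄`. -/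
def ip (x y : ℍ[ℂ]) : ℂ := (x * star y).re

@[simp] lemma cconj_re (x : ℍ[ℂ]) : (cconj x).re = (starRingEnd ℂ) x.re := rfl
@[simp] lemma cconj_imI (x : ℍ[ℂ]) : (cconj x).imI = (starRingEnd ℂ) x.imI := rfl
@[simp] lemma cconj_imJ (x : ℍ[ℂ]) : (cconj x).imJ = (starRingEnd ℂ) x.imJ := rfl
@[simp] lemma cconj_imK (x : ℍ[ℂ]) : (cconj x).imK = (starRingEnd ℂ) x.imK := rfl

lemma cconj_mul (x y : ℍ[ℂ]) : cconj (x * y) = cconj x * cconj y := by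
  ext <;> simp [Quaternion.re_mul, Quaternion.imI_mul, Quaternion.imJ_mul,
    Quaternion.imK_mul]

lemma cconj_one : cconj (1 : ℍ[ℂ]) = 1 := by
  ext <;> simp [cconj]

lemma cconj_sub (x y : ℍ[ℂ]) : cconj (x - y) = cconj x - cconj y := by
  ext <;> simp

lemma star_cconj (x : ℍ[ℂ]) : star (cconj x) = cconj (star x) := by
  ext <;> simp

lemma re_mul_comm (x y : ℍ[ℂ]) : (x * y).re = (y * x).re := by
  simp [Quaternion.re_mul]; ring

lemma barStar_mul (x y : ℍ[ℂ]) : barStar (x * y) = barStar y * barStar x := by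
  simp [barStar, star_mul, cconj_mul]

lemma barStar_sub (x y : ℍ[ℂ]) : barStar (x - y) = barStar x - barStar y := by
  ext <;> simp [barStar, sub_eq_add_neg, add_comm]

lemma barStar_star (x : ℍ[ℂ]) : barStar (star x) = cconj x := by
  simp [barStar]

lemma star_barStar (x : ℍ[ℂ]) : star (barStar x) = cconj x := by
  simp [barStar, star_cconj]

/-- Lorentz invariance of the minimal connection coefficients (algebraic form):
with `Λ·Λ̄ = 1` and `ω' = Λ·ω·Λ̄ − dΛ·Λ̄`,
`⟨Λ·t·Λ̄*, ∂'(Λ·s·Λ̄*) + ω'·(Λ·s·Λ̄*) + (Λ·s·Λ̄*)·ω'̄*⟩ = ⟨t, ds + ω·s + s·ω̄*⟩`,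
where `∂'(Λ·s·Λ̄*)` is expanded by the Leibniz rule. -/
theorem stmt17 (Λ t s ds dΛ ω ω' : ℍ[ℂ]) (hΛ : Λ * star Λ = 1)
    (hω' : ω' = Λ * ω * star Λ - dΛ * star Λ) :
    ip (Λ * t * barStar Λ)
        (dΛ * s * barStar Λ + Λ * ds * barStar Λ + Λ * s * barStar dΛ
          + ω' * (Λ * s * barStar Λ) + (Λ * s * barStar Λ) * barStar ω')
      = ip t (ds + ω * s + s * barStar ω) := by
  subst hω'
  have h1 : star Λ * Λ = 1 := by
    have hc : star Λ * Λ = Λ * star Λ := by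
      ext <;> simp [Quaternion.re_mul, Quaternion.imI_mul, Quaternion.imJ_mul,
        Quaternion.imK_mul] <;> ring
    rw [hc, hΛ]
  have h2 : barStar Λ * cconj Λ = 1 := by
    rw [← barStar_star Λ, ← barStar_mul, h1, barStar, star_one, cconj_one]
  have e1 : (Λ * ω * star Λ - dΛ * star Λ) * (Λ * s * barStar Λ)
      = Λ * (ω * s) * barStar Λ - dΛ * s * barStar Λ :=
    calc (Λ * ω * star Λ - dΛ * star Λ) * (Λ * s * barStar Λ)
        = Λ * ω * (star Λ * Λ) * (s * barStar Λ)
          - dΛ * (star Λ * Λ) * (s * barStar Λ) := by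
            simp only [sub_mul, mul_sub]; noncomm_ring
      _ = Λ * (ω * s) * barStar Λ - dΛ * s * barStar Λ := by rw [h1]; noncomm_ring
  have e2 : (Λ * s * barStar Λ) * barStar (Λ * ω * star Λ - dΛ * star Λ)
      = Λ * (s * barStar ω) * barStar Λ - Λ * s * barStar dΛ := by
    rw [barStar_sub, barStar_mul, barStar_mul, barStar_mul, barStar_star]
    calc Λ * s * barStar Λ * (cconj Λ * (barStar ω * barStar Λ) - cconj Λ * barStar dΛ)
        = Λ * s * (barStar Λ * cconj Λ) * (barStar ω * barStar Λ)
          - Λ * s * (barStar Λ * cconj Λ) * barStar dΛ := by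
            simp only [sub_mul, mul_sub]; noncomm_ring
      _ = Λ * (s * barStar ω) * barStar Λ - Λ * s * barStar dΛ := by
          rw [h2]; noncomm_ring
  have key : dΛ * s * barStar Λ + Λ * ds * barStar Λ + Λ * s * barStar dΛ
      + (Λ * ω * star Λ - dΛ * star Λ) * (Λ * s * barStar Λ)
      + (Λ * s * barStar Λ) * barStar (Λ * ω * star Λ - dΛ * star Λ)
      = Λ * (ds + ω * s + s * barStar ω) * barStar Λ := by
    rw [e1, e2]; noncomm_ring
  rw [key]
  set N := ds + ω * s + s * barStar ω with hN
  show ip (Λ * t * barStar Λ) (Λ * N * barStar Λ) = ip t N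
  unfold ip
  rw [star_mul, star_mul, star_barStar]
  have e3 : Λ * t * barStar Λ * (cconj Λ * (star N * star Λ))
      = Λ * (t * ((barStar Λ * cconj Λ) * (star N * star Λ))) := by noncomm_ring
  rw [e3, h2, one_mul, re_mul_comm]
  have e4 : t * (star N * star Λ) * Λ = t * star N * (star Λ * Λ) := by noncomm_ring
  rw [e4, h1, mul_one]
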